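/- Let C be a smooth projective curve of genus g over an algebraically closed field k, S ⊂ C finite and nonempty, K = k(C), O_S the ring of rational functions regular outside S, and deg_S(x) = -Σ_{P∈S} v_P(x). Then for every x ∈ K there exists y ∈ O_S with deg_S(x - y) ≤ μ(S), where μ(S) is the index of speciality of S. In particular the Euclidean minimum M_S(K) = max_x min_y deg_S(x - y) satisfies M_S(K) ≤ μ(S) ≤ 2g - 1. -/

import Mathlib

open scoped Classical

/-- An abstract model of a smooth projective (geometrically irreducible) curve over `k`:
`K` is its function field, `Point` its set of closed points, `v P` the normalized discrete
valuation at `P`, `Ω` the one-dimensional `K`-vector space of rational differential forms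
with order function `ordω` and differential `d`, `genus` the genus, `Kcan` the divisor of a
fixed nonzero differential (a canonical divisor), and `ℓ D` the dimension of the
Riemann-Roch space `L(D)`.  The axioms record the standard facts: valuations are
multiplicative and satisfy the ultrametric inequality, a nonzero function has a degree-zero
divisor of finite support, constants have no zeros or poles, `ordω` shifts by `v` under
`K`-scaling, `deg Kcan = 2g - 2`, the Riemann-Roch theorem, the characterization of `ℓ` as
the dimension of `L(D)`, and Serre duality identifying `ℓ(Kcan - D)` with
`dim Ω(-D)` (so `ℓ (Kcan - D) = 0` iff there is no nonzero differential `ω` with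
`div ω ≥ D`). -/
structure AlgCurve (k : Type) [Field k] where
  K : Type
  [fieldK : Field K]
  [algK : Algebra k K]
  Point : Type
  v : Point → K → ℤ
  Ω : Type
  [acgΩ : AddCommGroup Ω]
  [modΩ : Module K Ω]
  ordω : Point → Ω → ℤ
  d : K → Ω
  genus : ℕ
  Kcan : Point →₀ ℤ
  ℓ : (Point →₀ ℤ) → ℕ
  v_mul : ∀ P (x y : K), x ≠ 0 → y ≠ 0 → v P (x * y) = v P x + v P y
  v_add : ∀ P (x y : K), x ≠ 0 → y ≠ 0 → x + y ≠ 0 → min (v P x) (v P y) ≤ v P (x + y)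
  v_finite : ∀ x : K, x ≠ 0 → (Function.support fun P => v P x).Finite
  v_sum_zero : ∀ x : K, x ≠ 0 → ∑ᶠ P, v P x = 0
  v_const : ∀ c : k, c ≠ 0 → ∀ P, v P (algebraMap k K c) = 0
  v_uniformizer : ∀ P, ∃ x : K, x ≠ 0 ∧ v P x = 1
  ordω_smul : ∀ P (x : K) (ω : Ω), x ≠ 0 → ω ≠ 0 → ordω P (x • ω) = v P x + ordω P ω
  exists_canform : ∃ ω : Ω, ω ≠ 0 ∧ ∀ P, ordω P ω = Kcan P
  d_add : ∀ x y : K, d (x + y) = d x + d y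
  d_mul : ∀ x y : K, d (x * y) = x • d y + y • d x
  d_const : ∀ c : k, d (algebraMap k K c) = 0
  deg_Kcan : (Kcan.sum fun _ n => n) = 2 * (genus : ℤ) - 2
  riemannRoch : ∀ D : Point →₀ ℤ,
    (ℓ D : ℤ) - (ℓ (Kcan - D) : ℤ) = (D.sum fun _ n => n) + 1 - genus
  ℓ_spec : ∀ D : Point →₀ ℤ, ∀ n : ℕ, n ≤ ℓ D ↔
    ∃ s : Finset K, s.card = n ∧ LinearIndependent k (fun x : s => (x : K)) ∧
      ∀ x ∈ s, x ≠ 0 ∧ ∀ P, 0 ≤ v P x + D P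
  serre : ∀ D : Point →₀ ℤ,
    ℓ (Kcan - D) = 0 ↔ ¬ ∃ ω : Ω, ω ≠ 0 ∧ ∀ P, D P ≤ ordω P ω

attribute [instance] AlgCurve.fieldK AlgCurve.algK AlgCurve.acgΩ AlgCurve.modΩ

namespace AlgCurve

variable {k : Type} [Field k]

/-- The degree of a divisor. -/
def deg {C : AlgCurve k} (D : C.Point →₀ ℤ) : ℤ := D.sum fun _ n => n

/-- `Ω(-D) = 0`: there is no nonzero differential form `ω` with `div ω ≥ D`. -/
def OmegaZero (C : AlgCurve k) (D : C.Point →₀ ℤ) : Prop :=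
  ¬ ∃ ω : C.Ω, ω ≠ 0 ∧ ∀ P, D P ≤ C.ordω P ω

/-- The index of speciality `μ(S)` of a finite set `S` of points: the minimal degree of a
divisor supported on `S` with `Ω(-D) = 0`. -/
noncomputable def μ (C : AlgCurve k) (S : Set C.Point) : ℤ :=
  sInf {n : ℤ | ∃ D : C.Point →₀ ℤ, ↑D.support ⊆ S ∧ C.OmegaZero D ∧ deg D = n}

/-- Membership in the ring `O_S` of rational functions regular outside `S`. -/
def MemOS (C : AlgCurve k) (S : Set C.Point) (x : C.K) : Prop :=
  x ≠ 0 → ∀ P, P ∉ S → 0 ≤ C.v P x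

/-- `deg_S x = -∑_{P ∈ S} v_P(x)` (meaningful for `x ≠ 0`). -/
noncomputable def degS (C : AlgCurve k) (S : Set C.Point) (x : C.K) : ℤ :=
  -∑ᶠ P ∈ S, C.v P x

/-- `n` is a Weierstrass gap of `P`: `ℓ(nP) = ℓ((n-1)P)`. -/
def IsGap (C : AlgCurve k) (P : C.Point) (n : ℤ) : Prop :=
  C.ℓ (Finsupp.single P n) = C.ℓ (Finsupp.single P (n - 1))

end AlgCurve
namespace AlgCurve

variable {k : Type} [Field k] (C : AlgCurve k)

lemma v_one (P : C.Point) : C.v P (1 : C.K) = 0 := by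
  have h := C.v_mul P 1 1 one_ne_zero one_ne_zero
  rw [mul_one] at h; linarith

/-- The Riemann-Roch space `L(D)` as a `k`-submodule of `K`. -/
def LS (D : C.Point →₀ ℤ) : Submodule k C.K where
  carrier := {x | x ≠ 0 → ∀ P, 0 ≤ C.v P x + D P}
  zero_mem' := fun h => absurd rfl h
  add_mem' := by
    intro a b ha hb h P
    rcases eq_or_ne a 0 with rfl | h0
    · rw [zero_add] at h ⊢; exact hb h P
    rcases eq_or_ne b 0 with rfl | h1
    · rw [add_zero] at h ⊢; exact ha h P
    · have hmin := C.v_add P a b h0 h1 h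
      have Ha := ha h0 P
      have Hb := hb h1 P
      have hm : -D P ≤ min (C.v P a) (C.v P b) := le_min (by linarith) (by linarith)
      linarith
  smul_mem' := by
    intro c x hx h P
    rcases eq_or_ne c 0 with rfl | hc
    · rw [zero_smul] at h; exact absurd rfl h
    have hx0 : x ≠ 0 := by rintro rfl; rw [smul_zero] at h; exact absurd rfl h
    have halg : (algebraMap k C.K c) ≠ 0 :=
      (map_ne_zero_iff _ (algebraMap k C.K).injective).mpr hc
    have hs : c • x = algebraMap k C.K c * x := Algebra.smul_def c x
    rw [hs, C.v_mul P _ x halg hx0, C.v_const c hc P]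
    have := hx hx0 P; linarith

lemma mem_LS {D : C.Point →₀ ℤ} {x : C.K} :
    x ∈ C.LS D ↔ (x ≠ 0 → ∀ P, 0 ≤ C.v P x + D P) := Iff.rfl

lemma LS_mono {D D' : C.Point →₀ ℤ} (h : ∀ P, D P ≤ D' P) : C.LS D ≤ C.LS D' := by
  intro x hx hx0 P
  have := hx hx0 P
  have := h P
  linarith

lemma le_ℓ_of_indep {D : C.Point →₀ ℤ} {n : ℕ} (f : Fin n → C.K)
    (hf : LinearIndependent k f) (hmem : ∀ i, f i ∈ C.LS D) : n ≤ C.ℓ D := by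
  rw [C.ℓ_spec D n]
  refine ⟨Finset.image f Finset.univ, ?_, ?_, ?_⟩
  · rw [Finset.card_image_of_injective _ hf.injective, Finset.card_univ, Fintype.card_fin]
  · have h1 : (↑(Finset.image f Finset.univ) : Set C.K) ⊆ Set.range f := by
      rw [Finset.coe_image, Finset.coe_univ, Set.image_univ]
    exact ((linearIndepOn_id_range_iff hf.injective).mpr hf).mono h1
  · intro x hx
    simp only [Finset.mem_image, Finset.mem_univ, true_and] at hx
    obtain ⟨i, rfl⟩ := hx
    exact ⟨hf.ne_zero i, fun P => hmem i (hf.ne_zero i) P⟩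

lemma indep_of_le_ℓ {D : C.Point →₀ ℤ} {n : ℕ} (h : n ≤ C.ℓ D) :
    ∃ f : Fin n → C.K, LinearIndependent k f ∧ ∀ i, f i ∈ C.LS D := by
  obtain ⟨s, hcard, hli, hmem⟩ := (C.ℓ_spec D n).mp h
  let e : Fin n ≃ s := (s.equivFinOfCardEq hcard).symm
  refine ⟨fun i => (e i : C.K), hli.comp e e.injective, fun i hi P => ?_⟩
  exact (hmem (e i) (e i).2).2 P

lemma finiteDimensional_LS (D : C.Point →₀ ℤ) : FiniteDimensional k (C.LS D) := by
  have hle : Module.rank k (C.LS D) ≤ (C.ℓ D : Cardinal) := by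
    apply rank_le
    intro s hs
    let e : Fin s.card ≃ s := s.equivFin.symm
    have h1 : LinearIndependent k (fun i : Fin s.card => ((e i : C.LS D) : C.K)) :=
      ((hs.comp e e.injective).map' (C.LS D).subtype (Submodule.ker_subtype _))
    exact C.le_ℓ_of_indep _ h1 (fun i => (e i : C.LS D).2)
  exact Module.rank_lt_aleph0_iff.mp (lt_of_le_of_lt hle (Cardinal.nat_lt_aleph0 _))

lemma ℓ_eq_finrank (D : C.Point →₀ ℤ) : C.ℓ D = Module.finrank k (C.LS D) := by
  haveI := C.finiteDimensional_LS D
  apply le_antisymm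
  · obtain ⟨f, hf, hmem⟩ := C.indep_of_le_ℓ (le_refl (C.ℓ D)) (D := D)
    let g : Fin (C.ℓ D) → C.LS D := fun i => ⟨f i, hmem i⟩
    have hg : LinearIndependent k g := hf.of_comp (C.LS D).subtype
    simpa using hg.fintype_card_le_finrank
  · have b := Module.finBasis k (C.LS D)
    refine C.le_ℓ_of_indep (fun i => ((b i : C.LS D) : C.K)) ?_ (fun i => (b i).2)
    exact b.linearIndependent.map' (C.LS D).subtype (Submodule.ker_subtype _)

lemma deg_add (A B : C.Point →₀ ℤ) : deg (A + B) = deg A + deg B :=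
  Finsupp.sum_add_index' (fun _ => rfl) (fun _ _ _ => rfl)

lemma deg_sub (A B : C.Point →₀ ℤ) : deg (A - B) = deg A - deg B :=
  Finsupp.sum_sub_index (fun _ _ _ => rfl)

lemma deg_single (P : C.Point) (n : ℤ) : deg (Finsupp.single P n) = n :=
  Finsupp.sum_single_index rfl

lemma deg_nonneg_of_exists {D : C.Point →₀ ℤ} (x : C.K) (hx : x ≠ 0)
    (h : ∀ P, 0 ≤ C.v P x + D P) : 0 ≤ deg D := by
  classical
  have hVfin := C.v_finite x hx
  set T : Finset C.Point := hVfin.toFinset ∪ D.support with hT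
  have hvsum : ∑ P ∈ T, C.v P x = 0 := by
    rw [← C.v_sum_zero x hx]
    exact (finsum_eq_sum_of_support_subset _ (fun P hP => by
      simp only [hT, Finset.coe_union, Set.mem_union]
      exact Or.inl (hVfin.mem_toFinset.mpr hP))).symm
  have hdsum : deg D = ∑ P ∈ T, D P :=
    Finsupp.sum_of_support_subset D Finset.subset_union_right _ (fun _ _ => rfl)
  have hpos : 0 ≤ ∑ P ∈ T, (C.v P x + D P) := Finset.sum_nonneg (fun P _ => h P)
  rw [Finset.sum_add_distrib, hvsum, zero_add] at hpos
  rw [hdsum]; exact hpos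

lemma ℓ_eq_zero_of_deg_neg {D : C.Point →₀ ℤ} (h : deg D < 0) : C.ℓ D = 0 := by
  by_contra hne
  have h1 : 1 ≤ C.ℓ D := Nat.one_le_iff_ne_zero.mpr hne
  obtain ⟨s, hcard, -, hmem⟩ := (C.ℓ_spec D 1).mp h1
  obtain ⟨x, hx⟩ := Finset.card_eq_one.mp hcard
  have hm := hmem x (by simp [hx])
  exact absurd (C.deg_nonneg_of_exists x hm.1 hm.2) (not_le.mpr h)

lemma ℓ_nonspecial {D : C.Point →₀ ℤ} (h : C.OmegaZero D) :
    (C.ℓ D : ℤ) = deg D + 1 - C.genus := by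
  have h0 : C.ℓ (C.Kcan - D) = 0 := (C.serre D).mpr h
  have hrr := C.riemannRoch D
  rw [h0] at hrr
  have : (D.sum fun _ n => n) = deg D := rfl
  rw [this] at hrr
  push_cast at hrr
  linarith

lemma omegaZero_mono {D D' : C.Point →₀ ℤ} (hle : ∀ P, D P ≤ D' P)
    (h : C.OmegaZero D) : C.OmegaZero D' := by
  rintro ⟨ω, hω, hord⟩
  exact h ⟨ω, hω, fun P => (hle P).trans (hord P)⟩

end AlgCurve

theorem stmt10 (k : Type) [Field k] [IsAlgClosed k] (C : AlgCurve k)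
    (S : Set C.Point) (hfin : S.Finite) (hne : S.Nonempty) :
    (∀ x : C.K, ∃ y : C.K, C.MemOS S y ∧ (x = y ∨ C.degS S (x - y) ≤ C.μ S)) ∧
    C.μ S ≤ 2 * (C.genus : ℤ) - 1 := by
  classical
  set T : Set ℤ :=
    {n : ℤ | ∃ D : C.Point →₀ ℤ, ↑D.support ⊆ S ∧ C.OmegaZero D ∧ AlgCurve.deg D = n} with hTdef
  have hμdef : C.μ S = sInf T := rfl
  obtain ⟨P₀, hP₀⟩ := hne
  have hD₀ : (2 * (C.genus : ℤ) - 1) ∈ T := by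
    refine ⟨Finsupp.single P₀ (2 * (C.genus : ℤ) - 1), ?_, ?_, C.deg_single _ _⟩
    · intro P hP
      have h1 : P ∈ ({P₀} : Finset C.Point) :=
        Finsupp.support_single_subset (Finset.mem_coe.mp hP)
      rw [Finset.mem_singleton] at h1
      rw [h1]; exact hP₀
    · apply (C.serre _).mp
      apply C.ℓ_eq_zero_of_deg_neg
      rw [C.deg_sub, C.deg_single]
      have hK : AlgCurve.deg C.Kcan = 2 * (C.genus : ℤ) - 2 := C.deg_Kcan
      linarith
  have hbdd : BddBelow T := by
    refine ⟨(C.genus : ℤ) - 1, ?_⟩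
    rintro n ⟨D, -, hΩ, rfl⟩
    have hn := C.ℓ_nonspecial hΩ
    have h0 : (0 : ℤ) ≤ (C.ℓ D : ℤ) := Int.ofNat_nonneg _
    linarith
  have hμle : C.μ S ≤ 2 * (C.genus : ℤ) - 1 := by
    rw [hμdef]; exact csInf_le hbdd hD₀
  have hμmem : C.μ S ∈ T := by rw [hμdef]; exact Int.csInf_mem ⟨_, hD₀⟩ hbdd
  obtain ⟨Dμ, hsupp, hΩ, hdeg⟩ := hμmem
  refine ⟨?_, hμle⟩
  intro x
  rcases eq_or_ne x 0 with rfl | hx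
  · exact ⟨0, fun h => absurd rfl h, Or.inl rfl⟩
  have hDμ0 : ∀ P, P ∉ S → Dμ P = 0 := by
    intro P hP
    by_contra h
    exact hP (hsupp (Finset.mem_coe.mpr (Finsupp.mem_support_iff.mpr h)))
  have hVfin := C.v_finite x hx
  set T0 : Finset C.Point := hVfin.toFinset ∪ Dμ.support ∪ hfin.toFinset with hT0
  have hmemT0 : ∀ P : C.Point, (C.v P x ≠ 0 ∨ Dμ P ≠ 0 ∨ P ∈ S) → P ∈ T0 := by
    intro P hP
    simp only [hT0, Finset.mem_union]
    rcases hP with h | h | h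
    · exact Or.inl (Or.inl (hVfin.mem_toFinset.mpr h))
    · exact Or.inl (Or.inr (Finsupp.mem_support_iff.mpr h))
    · exact Or.inr (hfin.mem_toFinset.mpr h)
  set N : C.Point →₀ ℤ := Finsupp.onFinset T0
      (fun P => if P ∈ S then max (-(C.v P x)) (Dμ P) else max (-(C.v P x)) 0)
      (by
        intro P h
        by_cases hP : P ∈ S
        · exact hmemT0 P (Or.inr (Or.inr hP))
        · simp only [hP, if_false] at h
          refine hmemT0 P (Or.inl fun h0 => h ?_)
          rw [h0]; simp) with hNdef
  set NS : C.Point →₀ ℤ := Finsupp.onFinset T0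
      (fun P => if P ∈ S then max (-(C.v P x)) (Dμ P) else 0)
      (by
        intro P h
        by_cases hP : P ∈ S
        · exact hmemT0 P (Or.inr (Or.inr hP))
        · simp only [hP, if_false] at h; exact absurd rfl h) with hNSdef
  set N' : C.Point →₀ ℤ := Finsupp.onFinset T0
      (fun P => if P ∈ S then Dμ P else max (-(C.v P x)) 0)
      (by
        intro P h
        by_cases hP : P ∈ S
        · exact hmemT0 P (Or.inr (Or.inr hP))
        · simp only [hP, if_false] at h
          refine hmemT0 P (Or.inl fun h0 => h ?_)
          rw [h0]; simp) with hN'def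
  have hN : ∀ P, N P = if P ∈ S then max (-(C.v P x)) (Dμ P) else max (-(C.v P x)) 0 :=
    fun _ => rfl
  have hNS : ∀ P, NS P = if P ∈ S then max (-(C.v P x)) (Dμ P) else 0 := fun _ => rfl
  have hN' : ∀ P, N' P = if P ∈ S then Dμ P else max (-(C.v P x)) 0 := fun _ => rfl
  -- pointwise inequalities
  have hDle_NS : ∀ P, Dμ P ≤ NS P := by
    intro P; rw [hNS P]
    by_cases hP : P ∈ S
    · rw [if_pos hP]; exact le_max_right _ _
    · rw [if_neg hP, hDμ0 P hP]
  have hDle_N' : ∀ P, Dμ P ≤ N' P := by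
    intro P; rw [hN' P]
    by_cases hP : P ∈ S
    · rw [if_pos hP]
    · rw [if_neg hP, hDμ0 P hP]; exact le_max_right _ _
  have hNS_le_N : ∀ P, NS P ≤ N P := by
    intro P; rw [hNS P, hN P]
    by_cases hP : P ∈ S
    · rw [if_pos hP, if_pos hP]
    · rw [if_neg hP, if_neg hP]; exact le_max_right _ _
  have hN'_le_N : ∀ P, N' P ≤ N P := by
    intro P; rw [hN' P, hN P]
    by_cases hP : P ∈ S
    · rw [if_pos hP, if_pos hP]; exact le_max_right _ _
    · rw [if_neg hP, if_neg hP]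
  have hDle_N : ∀ P, Dμ P ≤ N P := fun P => (hDle_NS P).trans (hNS_le_N P)
  have hx_le_N : ∀ P, -(C.v P x) ≤ N P := by
    intro P; rw [hN P]
    by_cases hP : P ∈ S
    · rw [if_pos hP]; exact le_max_left _ _
    · rw [if_neg hP]; exact le_max_left _ _
  -- nonspeciality
  have hΩNS := C.omegaZero_mono hDle_NS hΩ
  have hΩN' := C.omegaZero_mono hDle_N' hΩ
  have hΩN := C.omegaZero_mono hDle_N hΩ
  -- finsupp identity and degrees
  have hkey : NS + N' = N + Dμ := by
    ext P
    simp only [Finsupp.add_apply, hNS P, hN' P, hN P]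
    by_cases hP : P ∈ S
    · simp [hP]
    · simp [hP, hDμ0 P hP]
  have hdegsum : AlgCurve.deg NS + AlgCurve.deg N' = AlgCurve.deg N + AlgCurve.deg Dμ := by
    rw [← C.deg_add, ← C.deg_add, hkey]
  -- dimension count
  haveI i1 := C.finiteDimensional_LS NS
  haveI i2 := C.finiteDimensional_LS N'
  haveI i3 := C.finiteDimensional_LS N
  haveI i4 := C.finiteDimensional_LS Dμ
  have hinf : C.LS NS ⊓ C.LS N' = C.LS Dμ := by
    apply le_antisymm
    · intro z hz
      obtain ⟨h1, h2⟩ := Submodule.mem_inf.mp hz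
      intro hz0 P
      have a1 := h1 hz0 P
      have a2 := h2 hz0 P
      by_cases hP : P ∈ S
      · rw [hN' P, if_pos hP] at a2; exact a2
      · rw [hNS P, if_neg hP] at a1
        rw [hDμ0 P hP]; linarith
    · exact le_inf (C.LS_mono hDle_NS) (C.LS_mono hDle_N')
  have h2 := Submodule.finrank_sup_add_finrank_inf_eq (C.LS NS) (C.LS N')
  rw [hinf, ← C.ℓ_eq_finrank Dμ, ← C.ℓ_eq_finrank NS, ← C.ℓ_eq_finrank N'] at h2
  have h2' : (Module.finrank k ↥(C.LS NS ⊔ C.LS N') : ℤ) + (C.ℓ Dμ : ℤ)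
      = (C.ℓ NS : ℤ) + (C.ℓ N' : ℤ) := by exact_mod_cast h2
  have zNS := C.ℓ_nonspecial hΩNS
  have zN' := C.ℓ_nonspecial hΩN'
  have zN := C.ℓ_nonspecial hΩN
  have zD := C.ℓ_nonspecial hΩ
  have hfr : (Module.finrank k ↥(C.LS NS ⊔ C.LS N') : ℤ) = (C.ℓ N : ℤ) := by linarith
  have hfr' : Module.finrank k ↥(C.LS NS ⊔ C.LS N') = Module.finrank k ↥(C.LS N) := by
    rw [← C.ℓ_eq_finrank N]; exact_mod_cast hfr
  have hsup_eq : C.LS NS ⊔ C.LS N' = C.LS N :=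
    Submodule.eq_of_le_of_finrank_eq
      (sup_le (C.LS_mono hNS_le_N) (C.LS_mono hN'_le_N)) hfr'
  have hxN : x ∈ C.LS N := by
    intro _ P
    have := hx_le_N P
    linarith
  rw [← hsup_eq] at hxN
  obtain ⟨y, hy, z, hz, hyz⟩ := Submodule.mem_sup.mp hxN
  refine ⟨y, ?_, ?_⟩
  · intro hy0 P hPS
    have hv := (C.mem_LS.mp hy) hy0 P
    rw [hNS P, if_neg hPS] at hv
    linarith
  · have hzx : x - y = z := by rw [← hyz]; ring
    rcases eq_or_ne z 0 with rfl | hz0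
    · left; rw [← hyz, add_zero]
    right
    rw [hzx]
    have hzmem := C.mem_LS.mp hz
    have hbound : ∀ P ∈ hfin.toFinset, -C.v P z ≤ Dμ P := by
      intro P hP
      have hPS : P ∈ S := hfin.mem_toFinset.mp hP
      have hv := hzmem hz0 P
      rw [hN' P, if_pos hPS] at hv
      linarith
    have h1 : C.degS S z = -∑ P ∈ hfin.toFinset, C.v P z := by
      unfold AlgCurve.degS
      rw [finsum_mem_eq_finite_toFinset_sum _ hfin]
    have hss : AlgCurve.deg Dμ = ∑ P ∈ hfin.toFinset, Dμ P :=
      Finsupp.sum_of_support_subset Dμ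
        (fun P hP => hfin.mem_toFinset.mpr (hsupp (Finset.mem_coe.mpr hP))) _
        (fun _ _ => rfl)
    rw [h1, ← hdeg, hss]
    have hsum := Finset.sum_le_sum hbound
    rw [Finset.sum_neg_distrib] at hsum
    exact hsum
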